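/- Let r be a prime with r ≥ 7 and r ≢ 4 (mod 5). Regard F_r^5 as a representation of Z/5Z acting by cyclic permutation of coordinates. Then the complement of the trivial subrepresentation (the sum-zero hyperplane) is either irreducible or a direct sum of 4 pairwise distinct characters, and in either case it contains a vector all of whose 5 coordinates are pairwise distinct. -/

import Mathlib

/-- The cyclic shift endomorphism of `(ZMod r)^5`. -/
noncomputable def cyclicShift (r : ℕ) : (Fin 5 → ZMod r) →ₗ[ZMod r] (Fin 5 → ZMod r) :=
  LinearMap.funLeft (ZMod r) (ZMod r) (fun i => i + 1)

/-- The sum-zero hyperplane in `(ZMod r)^5`. -/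
noncomputable def sumZero (r : ℕ) : Submodule (ZMod r) (Fin 5 → ZMod r) :=
  LinearMap.ker (∑ i : Fin 5, LinearMap.proj i)

open Polynomial Module Fin.NatCast Fin.CommRing

lemma mem_sumZero {r : ℕ} {u : Fin 5 → ZMod r} : u ∈ sumZero r ↔ ∑ i, u i = 0 := by
  simp [sumZero, LinearMap.mem_ker, LinearMap.sum_apply]

lemma shift_pow_apply {r : ℕ} (n : ℕ) (u : Fin 5 → ZMod r) (j : Fin 5) :
    ((cyclicShift r ^ n) u) j = u (j + n) := by
  induction n generalizing u j with
  | zero => simp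
  | succ n ih =>
    rw [pow_succ']
    show (cyclicShift r) ((cyclicShift r ^ n) u) j = _
    show ((cyclicShift r ^ n) u) (j + 1) = _
    rw [ih]
    show u (j + 1 + n) = u (j + (n+1 : ℕ))
    congr 1
    push_cast
    ring

lemma aeval_cyclotomic_shift {r : ℕ} (u : Fin 5 → ZMod r) (hu : u ∈ sumZero r) :
    (aeval (cyclicShift r) (cyclotomic 5 (ZMod r))) u = 0 := by
  have h5 : Fact (Nat.Prime 5) := ⟨by norm_num⟩
  rw [cyclotomic_prime]
  simp only [map_sum, map_pow, aeval_X, LinearMap.coe_sum, Finset.sum_apply]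
  funext j
  rw [Finset.sum_apply]
  have : ∀ i ∈ Finset.range 5, ((cyclicShift r ^ i) u) j = u (j + i) := fun i _ => shift_pow_apply i u j
  rw [Finset.sum_congr rfl this]
  show ∑ i ∈ Finset.range 5, u (j + i) = (0 : Fin 5 → ZMod r) j
  have hb : ∑ i ∈ Finset.range 5, u (j + i) = ∑ i : Fin 5, u (j + i) := by
    rw [Finset.sum_range fun i => u (j + i)]
    apply Fintype.sum_congr
    intro i
    rw [Fin.cast_val_eq_self i]
  rw [hb]
  have := Fintype.sum_equiv (Equiv.addLeft j) (fun i => u (j + i)) u (fun i => rfl)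
  rw [this]
  simpa using mem_sumZero.mp hu

lemma five_ne_zero {r : ℕ} (hr : r.Prime) (hr7 : 7 ≤ r) : (5 : ZMod r) ≠ 0 := by
  have : ((5 : ℕ) : ZMod r) ≠ 0 := by
    rw [Ne, ZMod.natCast_eq_zero_iff]
    intro h
    have := Nat.le_of_dvd (by norm_num) h
    omega
  simpa using this

lemma finrank_sumZero {r : ℕ} (hr : r.Prime) (hr7 : 7 ≤ r) :
    Module.finrank (ZMod r) (sumZero r) = 4 := by
  haveI : Fact r.Prime := ⟨hr⟩
  set f : (Fin 5 → ZMod r) →ₗ[ZMod r] ZMod r := ∑ i : Fin 5, LinearMap.proj i with hf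
  have hsurj : Function.Surjective f := by
    intro y
    refine ⟨fun _ => y / 5, ?_⟩
    have : f (fun _ => y / 5) = ∑ i : Fin 5, y / 5 := by
      simp [hf, LinearMap.sum_apply]
    rw [this]
    rw [Finset.sum_const]
    simp only [Finset.card_univ, Fintype.card_fin, nsmul_eq_mul]
    field_simp [five_ne_zero hr hr7]
    push_cast; ring
  have hrange : LinearMap.range f = ⊤ := LinearMap.range_eq_top.mpr hsurj
  have h1 := LinearMap.finrank_range_add_finrank_ker f
  rw [hrange] at h1
  have htop : Module.finrank (ZMod r) (⊤ : Submodule (ZMod r) (ZMod r)) = 1 := by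
    rw [finrank_top]; exact Module.finrank_self _
  have hdom : Module.finrank (ZMod r) (Fin 5 → ZMod r) = 5 := by
    simp [Module.finrank_pi]
  rw [htop, hdom] at h1
  have : sumZero r = LinearMap.ker f := rfl
  rw [this]
  omega

lemma exists_distinct_vector {r : ℕ} (hr : r.Prime) (hr7 : 7 ≤ r) :
    ∃ w ∈ sumZero r, Function.Injective w := by
  haveI : Fact r.Prime := ⟨hr⟩
  haveI : NeZero r := ⟨hr.pos.ne'⟩
  refine ⟨fun i => ((i : ℕ) : ZMod r) - 2, ?_, ?_⟩
  · rw [mem_sumZero]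
    rw [Fin.sum_univ_five]
    norm_num [show ((0:Fin 5):ℕ)=0 from rfl, show ((1:Fin 5):ℕ)=1 from rfl,
      show ((2:Fin 5):ℕ)=2 from rfl, show ((3:Fin 5):ℕ)=3 from rfl,
      show ((4:Fin 5):ℕ)=4 from rfl]
  · intro i j hij
    have : ((i : ℕ) : ZMod r) = ((j : ℕ) : ZMod r) := by
      have := congrArg (· + (2 : ZMod r)) hij
      simpa using this
    have hv := congrArg ZMod.val this
    rw [ZMod.val_natCast_of_lt (by omega : (i:ℕ) < r),
        ZMod.val_natCast_of_lt (by omega : (j:ℕ) < r)] at hv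
    exact Fin.ext hv

lemma no_small_factor {r : ℕ} (hr : r.Prime) (hr7 : 7 ≤ r)
    (hmod : r % 5 = 2 ∨ r % 5 = 3) (h : (ZMod r)[X]) (hh : Irreducible h)
    (hdvd : h ∣ cyclotomic 5 (ZMod r)) (hd : h.natDegree ≤ 2) : False := by
  haveI : Fact r.Prime := ⟨hr⟩
  haveI : Fact (Irreducible h) := ⟨hh⟩
  have hh0 : h ≠ 0 := hh.ne_zero
  set K := AdjoinRoot h
  let pb : PowerBasis (ZMod r) K := AdjoinRoot.powerBasis hh0
  haveI : Fintype K := Module.fintypeOfFintype pb.basis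
  have hcard : Fintype.card K = r ^ h.natDegree := by
    rw [Module.card_fintype pb.basis]
    simp [ZMod.card, pb, AdjoinRoot.powerBasis_dim]
  -- the root
  have hroot : (cyclotomic 5 K).IsRoot (AdjoinRoot.root h) := by
    have h1 : (Polynomial.aeval (AdjoinRoot.root h)) h = 0 := by
      simp [aeval_def, AdjoinRoot.eval₂_root]
    obtain ⟨g, hg⟩ := hdvd
    have : Polynomial.aeval (AdjoinRoot.root h) (cyclotomic 5 (ZMod r)) = 0 := by
      rw [hg, map_mul, h1, zero_mul]
    rw [IsRoot.def, ← Polynomial.map_cyclotomic 5 (algebraMap (ZMod r) K), eval_map, ← aeval_def]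
    exact this
  haveI : NeZero ((5 : ℕ) : K) := by
    constructor
    have : ((5 : ℕ) : K) = algebraMap (ZMod r) K (5 : ZMod r) := by
      rw [show (5 : ZMod r) = ((5 : ℕ) : ZMod r) by norm_num, map_natCast]
    rw [this]
    simp only [map_ne_zero_iff _ (algebraMap (ZMod r) K).injective]
    exact five_ne_zero hr hr7
  have hprim : IsPrimitiveRoot (AdjoinRoot.root h) 5 := isRoot_cyclotomic_iff.mp hroot
  -- order 5 element in Kˣ
  have hα5 : (AdjoinRoot.root h) ^ 5 = 1 := hprim.pow_eq_one
  have hαne : IsUnit (AdjoinRoot.root h) := by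
    apply IsUnit.of_mul_eq_one ((AdjoinRoot.root h) ^ 4)
    rw [← pow_succ']; exact hα5
  obtain ⟨u, hu⟩ := hαne
  have hu5 : u ^ 5 = 1 := by
    ext; push_cast [hu]; exact hα5
  have hord : orderOf u = 5 := by
    have h1 : orderOf u ∣ 5 := orderOf_dvd_of_pow_eq_one hu5
    have h2 : 5 ∣ orderOf u := by
      apply hprim.dvd_of_pow_eq_one
      have : (u : K) ^ orderOf u = 1 := by
        rw [← Units.val_pow_eq_pow_val, pow_orderOf_eq_one]; rfl
      rw [← hu]; exact_mod_cast this
    exact Nat.dvd_antisymm h1 h2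
  have hdvdcard : 5 ∣ Fintype.card Kˣ := hord ▸ orderOf_dvd_card
  classical
  rw [Fintype.card_units, hcard] at hdvdcard
  -- now 5 ∣ r ^ d - 1 with d ≤ 2, r % 5 ∈ {2,3}
  have hd1 : 1 ≤ h.natDegree := hh.natDegree_pos
  have hrd : r ^ h.natDegree % 5 = 1 := by
    have h2 : 2 ≤ r ^ h.natDegree := by
      calc 2 ≤ r := by omega
      _ ≤ r ^ h.natDegree := Nat.le_self_pow (by omega) r
    omega
  rw [Nat.pow_mod] at hrd
  interval_cases hdeg : h.natDegree <;> rcases hmod with h5 | h5 <;> rw [h5] at hrd <;> simp_all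

lemma cyclotomic_irr {r : ℕ} (hr : r.Prime) (hr7 : 7 ≤ r)
    (hmod : r % 5 = 2 ∨ r % 5 = 3) : Irreducible (cyclotomic 5 (ZMod r)) := by
  haveI : Fact r.Prime := ⟨hr⟩
  set Φ := cyclotomic 5 (ZMod r) with hΦ
  have hdeg : Φ.natDegree = 4 := by
    rw [hΦ, natDegree_cyclotomic]; rfl
  have hΦ0 : Φ ≠ 0 := cyclotomic_ne_zero 5 _
  have hΦu : ¬IsUnit Φ := by
    intro hu
    have := natDegree_eq_zero_of_isUnit hu
    omega
  by_contra hni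
  rw [irreducible_iff] at hni
  push_neg at hni
  obtain ⟨f, g, hfg, hf, hg⟩ := hni hΦu
  have hf0 : f ≠ 0 := fun h => hΦ0 (by rw [hfg, h, zero_mul])
  have hg0 : g ≠ 0 := fun h => hΦ0 (by rw [hfg, h, mul_zero])
  have hsum : f.natDegree + g.natDegree = 4 := by
    rw [← hdeg, hfg, natDegree_mul hf0 hg0]
  have hunit : ∀ p : (ZMod r)[X], p ≠ 0 → p.natDegree = 0 → IsUnit p := by
    intro p hp0 hpd
    rw [isUnit_iff_degree_eq_zero, degree_eq_natDegree hp0, hpd]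
    simp
  have hf1 : 1 ≤ f.natDegree := by
    rcases Nat.eq_zero_or_pos f.natDegree with h0 | h1
    · exact absurd (hunit f hf0 h0) hf
    · exact h1
  have hg1 : 1 ≤ g.natDegree := by
    rcases Nat.eq_zero_or_pos g.natDegree with h0 | h1
    · exact absurd (hunit g hg0 h0) hg
    · exact h1
  have hsmall : f.natDegree ≤ 2 ∨ g.natDegree ≤ 2 := by omega
  have key : ∀ p : (ZMod r)[X], p ∣ Φ → ¬IsUnit p → p ≠ 0 → p.natDegree ≤ 2 → False := by
    intro p hpdvd hpu hp0 hpd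
    obtain ⟨k, hk, hkdvd⟩ := WfDvdMonoid.exists_irreducible_factor hpu hp0
    have hkd : k.natDegree ≤ p.natDegree := Polynomial.natDegree_le_of_dvd hkdvd hp0
    exact no_small_factor hr hr7 hmod k hk (hkdvd.trans hpdvd) (le_trans hkd hpd)
  rcases hsmall with hs | hs
  · exact key f ⟨g, hfg⟩ hf hf0 hs
  · exact key g ⟨f, by rw [hfg, mul_comm]⟩ hg hg0 hs


lemma caseA {r : ℕ} (hr : r.Prime) (hr7 : 7 ≤ r) (hmod : r % 5 = 2 ∨ r % 5 = 3) :
    ∀ U : Submodule (ZMod r) (Fin 5 → ZMod r), U ≤ sumZero r →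
      U.map (cyclicShift r) ≤ U → U = ⊥ ∨ U = sumZero r := by
  haveI : Fact r.Prime := ⟨hr⟩
  intro U hUle hUinv
  by_cases hbot : U = ⊥
  · exact Or.inl hbot
  right
  obtain ⟨u, huU, hu0⟩ := Submodule.ne_bot_iff U |>.mp hbot
  set T := cyclicShift r with hT
  have hpowmem : ∀ k : ℕ, (T ^ k) u ∈ U := by
    intro k
    induction k with
    | zero => simpa using huU
    | succ k ih =>
      rw [pow_succ']
      exact hUinv ⟨_, ih, rfl⟩
  have husz : u ∈ sumZero r := hUle huU
  have hli : LinearIndependent (ZMod r) (fun k : Fin 4 => (T ^ (k : ℕ)) u) := by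
    rw [Fintype.linearIndependent_iff]
    intro a ha
    by_contra hcon
    push_neg at hcon
    obtain ⟨k₀, hk₀⟩ := hcon
    set p : (ZMod r)[X] := ∑ k : Fin 4, C (a k) * X ^ (k : ℕ) with hp
    have hp0 : p ≠ 0 := by
      intro h0
      apply hk₀
      have : p.coeff (k₀ : ℕ) = a k₀ := by
        rw [hp, finset_sum_coeff]
        simp only [coeff_C_mul, coeff_X_pow]
        rw [Finset.sum_eq_single k₀]
        · simp
        · intro b _ hb
          rw [if_neg, mul_zero]
          exact fun hc => hb (Fin.ext hc.symm)
        · simp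
      rw [h0] at this
      simpa using this.symm
    have hpd : p.natDegree ≤ 3 := by
      rw [hp]
      apply Polynomial.natDegree_sum_le_of_forall_le
      intro k _
      calc (C (a k) * X ^ (k : ℕ)).natDegree ≤ (X ^ (k:ℕ) : (ZMod r)[X]).natDegree :=
            natDegree_C_mul_le _ _
        _ ≤ 3 := by rw [natDegree_X_pow]; omega
    have hnd : ¬ cyclotomic 5 (ZMod r) ∣ p := by
      intro hdvd
      have := Polynomial.natDegree_le_of_dvd hdvd hp0
      rw [natDegree_cyclotomic] at this
      have : (4 : ℕ) ≤ 3 := le_trans (by norm_num [Nat.totient_prime (by norm_num : Nat.Prime 5)] at this ⊢; omega) hpd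
      omega
    have hcop : IsCoprime (cyclotomic 5 (ZMod r)) p :=
      ((cyclotomic_irr hr hr7 hmod).coprime_iff_not_dvd).mpr hnd
    obtain ⟨s, t, hst⟩ := hcop
    have happ := congrArg (fun q => (aeval T q) u) hst
    simp only [map_add, map_mul, map_one, LinearMap.add_apply, Module.End.mul_apply,
      Module.End.one_apply] at happ
    have hΦu : (aeval T (cyclotomic 5 (ZMod r))) u = 0 := aeval_cyclotomic_shift u husz
    have hpu : (aeval T p) u = 0 := by
      rw [hp]
      simp only [map_sum, map_mul, aeval_C, aeval_X_pow, LinearMap.coe_sum, Finset.sum_apply,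
        Module.End.mul_apply, Module.algebraMap_end_apply]
      exact ha
    rw [hΦu, hpu, map_zero, map_zero, add_zero] at happ
    exact hu0 happ.symm
  have hspan : Submodule.span (ZMod r) (Set.range fun k : Fin 4 => (T ^ (k : ℕ)) u) ≤ U := by
    rw [Submodule.span_le]
    rintro x ⟨k, rfl⟩
    exact hpowmem _
  have h4 : 4 ≤ Module.finrank (ZMod r) U := by
    have := finrank_span_eq_card hli
    rw [Fintype.card_fin] at this
    calc (4:ℕ) = _ := this.symm
      _ ≤ _ := Submodule.finrank_mono hspan
  exact Submodule.eq_of_le_of_finrank_le hUle (by rw [finrank_sumZero hr hr7]; exact h4)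

lemma caseB {r : ℕ} (hr : r.Prime) (hr7 : 7 ≤ r) (hmod : r % 5 = 1) :
    ∃ (c : Fin 4 → ZMod r) (v : Fin 4 → (Fin 5 → ZMod r)),
      Function.Injective c ∧ (∀ j, v j ∈ sumZero r) ∧
      LinearIndependent (ZMod r) v ∧ (∀ j, cyclicShift r (v j) = c j • v j) ∧
      Submodule.span (ZMod r) (Set.range v) = sumZero r := by
  haveI : Fact r.Prime := ⟨hr⟩
  haveI : Fact (Nat.Prime 5) := ⟨by norm_num⟩
  have hdvd : 5 ∣ Fintype.card (ZMod r)ˣ := by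
    rw [ZMod.card_units]; omega
  obtain ⟨g, hg⟩ := exists_prime_orderOf_dvd_card 5 hdvd
  set c : Fin 4 → ZMod r := fun j => ((g ^ ((j : ℕ) + 1) : (ZMod r)ˣ) : ZMod r) with hc
  have hcinj : Function.Injective c := by
    intro i j hij
    have : (g ^ ((i : ℕ) + 1) : (ZMod r)ˣ) = g ^ ((j : ℕ) + 1) := Units.ext hij
    have h2 := pow_injOn_Iio_orderOf (x := g)
      (by rw [hg]; exact Set.mem_Iio.mpr (by omega) : (i : ℕ) + 1 ∈ Set.Iio (orderOf g))
      (by rw [hg]; exact Set.mem_Iio.mpr (by omega) : (j : ℕ) + 1 ∈ Set.Iio (orderOf g)) this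
    exact Fin.ext (by omega)
  have hc5 : ∀ j, (c j) ^ 5 = 1 := by
    intro j
    rw [hc]
    have : (g ^ ((j:ℕ)+1)) ^ 5 = 1 := by
      rw [← pow_mul, mul_comm, pow_mul, ← hg, pow_orderOf_eq_one, one_pow]
    calc (((g ^ ((j : ℕ) + 1) : (ZMod r)ˣ) : ZMod r)) ^ 5
        = (((g ^ ((j:ℕ)+1)) ^ 5 : (ZMod r)ˣ) : ZMod r) := by push_cast; ring
      _ = 1 := by rw [this]; rfl
  have hcne1 : ∀ j, c j ≠ 1 := by
    intro j hj
    have : (g ^ ((j : ℕ) + 1) : (ZMod r)ˣ) = 1 := Units.ext hj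
    have h5 : orderOf g ∣ (j : ℕ) + 1 := orderOf_dvd_of_pow_eq_one this
    rw [hg] at h5
    have := Nat.le_of_dvd (by omega) h5
    omega
  set v : Fin 4 → (Fin 5 → ZMod r) := fun j i => (c j) ^ (i : ℕ) with hv
  have hmem : ∀ j, v j ∈ sumZero r := by
    intro j
    rw [mem_sumZero]
    have : ∑ i : Fin 5, (c j) ^ (i : ℕ) = ∑ i ∈ Finset.range 5, (c j) ^ i := by
      rw [Finset.sum_range]
    rw [hv]
    simp only []
    rw [this, geom_sum_eq (hcne1 j), hc5 j, sub_self, zero_div]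
  have hpowmod : ∀ j (n : ℕ), (c j) ^ (n % 5) = (c j) ^ n := by
    intro j n
    conv_rhs => rw [← Nat.div_add_mod n 5]
    rw [pow_add, pow_mul, hc5, one_pow, one_mul]
  have heig : ∀ j, cyclicShift r (v j) = c j • v j := by
    intro j
    funext i
    show v j (i + 1) = c j • (v j) i
    rw [hv]
    simp only [Pi.smul_apply, smul_eq_mul]
    show (c j) ^ ((i + 1 : Fin 5) : ℕ) = c j * (c j) ^ (i : ℕ)
    have : ((i + 1 : Fin 5) : ℕ) = ((i : ℕ) + 1) % 5 := by
      rw [Fin.add_def]; simp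
    rw [this, hpowmod, pow_succ, mul_comm]
  have hvne : ∀ j, v j ≠ 0 := by
    intro j h0
    have : v j 0 = 0 := by rw [h0]; rfl
    rw [hv] at this
    simp at this
  have hli : LinearIndependent (ZMod r) v := by
    apply Module.End.eigenvectors_linearIndependent' (cyclicShift r) c hcinj
    intro j
    exact ⟨by rw [Module.End.mem_eigenspace_iff]; exact heig j, hvne j⟩
  refine ⟨c, v, hcinj, hmem, hli, heig, ?_⟩
  have hle : Submodule.span (ZMod r) (Set.range v) ≤ sumZero r := by
    rw [Submodule.span_le]
    rintro x ⟨j, rfl⟩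
    exact hmem j
  apply Submodule.eq_of_le_of_finrank_le hle
  rw [finrank_sumZero hr hr7, finrank_span_eq_card hli, Fintype.card_fin]

/-- Let `r ≥ 7` be a prime with `r ≢ 4 (mod 5)`. For the action of `ℤ/5ℤ` on `F_r^5` by cyclic
permutation of coordinates, the sum-zero hyperplane (complement of the trivial subrepresentation)
is either irreducible or a direct sum of 4 pairwise distinct characters, and it contains a vector
with pairwise distinct coordinates. -/
theorem sum_zero_hyperplane_structure (r : ℕ) (hr : r.Prime) (hr7 : 7 ≤ r)
    (hmod : r % 5 ≠ 4) :
    ((∀ U : Submodule (ZMod r) (Fin 5 → ZMod r), U ≤ sumZero r →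
        U.map (cyclicShift r) ≤ U → U = ⊥ ∨ U = sumZero r) ∨
      (∃ (c : Fin 4 → ZMod r) (v : Fin 4 → (Fin 5 → ZMod r)),
        Function.Injective c ∧ (∀ j, v j ∈ sumZero r) ∧
        LinearIndependent (ZMod r) v ∧ (∀ j, cyclicShift r (v j) = c j • v j) ∧
        Submodule.span (ZMod r) (Set.range v) = sumZero r)) ∧
    ∃ w ∈ sumZero r, Function.Injective w := by
  constructor
  · have h0 : r % 5 ≠ 0 := by
      intro h
      have h5 : 5 ∣ r := Nat.dvd_of_mod_eq_zero h
      rcases (hr.eq_one_or_self_of_dvd 5 h5) with h1 | h1 <;> omega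
    have : r % 5 = 1 ∨ r % 5 = 2 ∨ r % 5 = 3 := by omega
    rcases this with h | h
    · exact Or.inr (caseB hr hr7 h)
    · exact Or.inl (caseA hr hr7 h)
  · exact exists_distinct_vector hr hr7
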